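/- Fix r > 0, 0 ≤ t < T, K > 0 and p ∈ (0,1). The indifference price P(α) = ln(1 + (e^{αK} - 1)p)/(α e^{r(T-t)}) is a strictly increasing function of the risk-aversion parameter α > 0, with lim_{α→0⁺} P(α) = pK e^{-r(T-t)} and lim_{α→∞} P(α) = K e^{-r(T-t)}. -/

import Mathlib

open Real Filter

/-- The indifference price P(α) = ln(1+(e^{αK}-1)p)/(αe^{r(T-t)}) is strictly
increasing in the risk-aversion α > 0, with limit pKe^{-r(T-t)} as α → 0⁺ and
Ke^{-r(T-t)} as α → ∞. -/
theorem stmt_8 (r T t K p : ℝ)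
    (hr : 0 < r) (ht0 : 0 ≤ t) (htT : t < T) (hK : 0 < K)
    (hp : p ∈ Set.Ioo (0 : ℝ) 1)
    (P : ℝ → ℝ)
    (hP : ∀ a : ℝ, P a = log (1 + (exp (a * K) - 1) * p) / (a * exp (r * (T - t)))) :
    StrictMonoOn P (Set.Ioi 0) ∧
      Tendsto P (nhdsWithin 0 (Set.Ioi 0)) (nhds (p * K * exp (-(r * (T - t))))) ∧
      Tendsto P atTop (nhds (K * exp (-(r * (T - t))))) := by
  obtain ⟨hp0, hp1⟩ := hp
  have hc : (0:ℝ) < exp (r * (T - t)) := exp_pos _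
  set c := exp (r * (T - t)) with hcdef
  set h : ℝ → ℝ := fun a => log (1 - p + p * exp (a * K)) with hhdef
  have hDpos : ∀ a : ℝ, 0 < 1 - p + p * exp (a * K) := by
    intro a
    have := exp_pos (a * K)
    nlinarith
  have hPa : ∀ a : ℝ, P a = h a / (a * c) := by
    intro a
    rw [hP a]
    have e1 : 1 + (exp (a * K) - 1) * p = 1 - p + p * exp (a * K) := by ring
    rw [e1]
  have hh0 : h 0 = 0 := by simp [hhdef]
  have Hh : ∀ a : ℝ, HasDerivAt h (p * (exp (a*K) * K) / (1 - p + p * exp (a*K))) a := by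
    intro a
    have h1 : HasDerivAt (fun x : ℝ => x * K) K a := hasDerivAt_mul_const K
    have h2 : HasDerivAt (fun x : ℝ => exp (x * K)) (exp (a*K) * K) a := h1.exp
    have h3 : HasDerivAt (fun x : ℝ => 1 - p + p * exp (x * K)) (p * (exp (a*K) * K)) a :=
      ((h2.const_mul p).const_add (1 - p))
    exact h3.log (ne_of_gt (hDpos a))
  set φ : ℝ → ℝ := fun a => p * (exp (a*K) * K) / (1 - p + p * exp (a*K)) with hφdef
  have hderiv : deriv h = φ := funext fun a => (Hh a).deriv
  have Hφ : ∀ a : ℝ, HasDerivAt φ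
      ((p * (exp (a*K) * K * K) * (1 - p + p * exp (a*K)) -
        p * (exp (a*K) * K) * (p * (exp (a*K) * K))) / (1 - p + p * exp (a*K))^2) a := by
    intro a
    have h1 : HasDerivAt (fun x : ℝ => x * K) K a := hasDerivAt_mul_const K
    have h2 : HasDerivAt (fun x : ℝ => exp (x * K)) (exp (a*K) * K) a := h1.exp
    have hN : HasDerivAt (fun x : ℝ => p * (exp (x*K) * K)) (p * (exp (a*K) * K * K)) a :=
      (h2.mul_const K).const_mul p
    have hD : HasDerivAt (fun x : ℝ => 1 - p + p * exp (x * K)) (p * (exp (a*K) * K)) a :=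
      ((h2.const_mul p).const_add (1 - p))
    exact hN.div hD (ne_of_gt (hDpos a))
  have hconv : StrictConvexOn ℝ Set.univ h := by
    apply strictConvexOn_of_deriv2_pos convex_univ
    · exact Continuous.continuousOn
        (continuous_iff_continuousAt.mpr fun a => (Hh a).continuousAt)
    · intro x _
      have e2 : deriv^[2] h x = deriv (deriv h) x := by
        simp [Function.iterate_succ, Function.iterate_one]
      rw [e2, hderiv, (Hφ x).deriv]
      have hnum : p * (exp (x*K) * K * K) * (1 - p + p * exp (x*K)) -
          p * (exp (x*K) * K) * (p * (exp (x*K) * K))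
          = p * K^2 * exp (x*K) * (1 - p) := by ring
      rw [hnum]
      have h1p : 0 < 1 - p := by linarith
      exact div_pos (mul_pos (by positivity) h1p) (by positivity)
  refine ⟨?_, ?_, ?_⟩
  · intro a ha b hb hab
    have ha0 : 0 < a := ha
    have hb0 : 0 < b := hb
    have key : h a < a / b * h b := by
      have hne : (0:ℝ) ≠ b := (ne_of_lt hb0)
      have hs1 : 0 < 1 - a/b := by
        have : a/b < 1 := (div_lt_one hb0).mpr hab
        linarith
      have hs2 : 0 < a/b := div_pos ha0 hb0
      have := hconv.2 (Set.mem_univ (0:ℝ)) (Set.mem_univ b) hne hs1 hs2 (by ring)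
      simp only [smul_eq_mul, mul_zero, zero_add, hh0] at this
      rw [div_mul_cancel₀ _ (ne_of_gt hb0)] at this
      linarith
    rw [hPa a, hPa b, div_lt_div_iff₀ (by positivity) (by positivity)]
    have key' : h a < a * h b / b := by rwa [div_mul_eq_mul_div] at key
    have key2 : h a * b < a * h b := (lt_div_iff₀ hb0).mp key'
    nlinarith [mul_pos hc (sub_pos.mpr key2)]
  · have hd0 : HasDerivAt h (p * K) 0 := by
      convert Hh 0 using 1
      norm_num
    have h1 : Tendsto (slope h 0) (nhdsWithin 0 (Set.Ioi 0)) (nhds (p*K)) :=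
      (hasDerivAt_iff_tendsto_slope.mp hd0).mono_left
        (nhdsWithin_mono 0 (fun x hx => Set.mem_compl_singleton_iff.mpr (ne_of_gt hx)))
    have h2 : Tendsto (fun a => slope h 0 a * c⁻¹) (nhdsWithin 0 (Set.Ioi 0))
        (nhds (p*K*c⁻¹)) := h1.mul_const _
    have heq : ∀ᶠ a in nhdsWithin 0 (Set.Ioi 0), slope h 0 a * c⁻¹ = P a := by
      filter_upwards [self_mem_nhdsWithin] with a ha
      have ha0 : 0 < a := ha
      rw [hPa a, slope_def_field, hh0]
      field_simp
      simp [ha0.ne']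
    have hval : p * K * exp (-(r * (T - t))) = p*K*c⁻¹ := by
      rw [exp_neg, hcdef]
    rw [hval]
    exact h2.congr' heq
  · have hmt : Tendsto (fun a : ℝ => a * K) atTop atTop :=
      tendsto_id.atTop_mul_const hK
    have hg : Tendsto (fun a : ℝ => p + (1-p) * exp (-(a*K))) atTop (nhds p) := by
      have he : Tendsto (fun a : ℝ => exp (-(a*K))) atTop (nhds 0) :=
        (tendsto_exp_neg_atTop_nhds_zero).comp hmt
      have := (he.const_mul (1-p)).const_add p
      simpa using this
    have hg0 : ∀ a : ℝ, 0 < p + (1-p) * exp (-(a*K)) := fun a =>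
      add_pos hp0 (mul_pos (by linarith) (exp_pos _))
    have hlog : Tendsto (fun a : ℝ => log (p + (1-p) * exp (-(a*K)))) atTop
        (nhds (log p)) := ((Real.continuousAt_log hp0.ne').tendsto).comp hg
    have hdiv : Tendsto (fun a : ℝ => log (p + (1-p) * exp (-(a*K))) / (a*c)) atTop
        (nhds 0) := hlog.div_atTop (tendsto_id.atTop_mul_const hc)
    have hsum : Tendsto (fun a : ℝ => K*c⁻¹ + log (p + (1-p) * exp (-(a*K))) / (a*c))
        atTop (nhds (K*c⁻¹ + 0)) := tendsto_const_nhds.add hdiv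
    have heq : ∀ᶠ a in atTop,
        K*c⁻¹ + log (p + (1-p) * exp (-(a*K))) / (a*c) = P a := by
      filter_upwards [eventually_gt_atTop (0:ℝ)] with a ha
      have h1 : exp (a*K) * exp (-(a*K)) = 1 := by
        rw [← exp_add, add_neg_cancel, exp_zero]
      have hDeq : 1 - p + p * exp (a*K) = exp (a*K) * (p + (1-p)*exp (-(a*K))) := by
        nlinarith [h1]
      rw [hPa a]
      simp only [hhdef]
      rw [hDeq, log_mul (exp_ne_zero _) (hg0 a).ne', log_exp]
      field_simp
    have hval : K * exp (-(r * (T - t))) = K*c⁻¹ + 0 := by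
      rw [exp_neg, hcdef, add_zero]
    rw [hval]
    exact hsum.congr' heq
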